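/- If N: Lie(n-1) → V is a linear map to a vector space V, then for every Lie monomial Γ, N(Γ) = Σ_a (Γ, 1a) N(Γ_{1a}), where the sum is over permutations a of the letters other than x_1. -/

import Mathlib

open scoped BigOperators

/-- `Wd m` : the algebra of formal ℚ-linear combinations of words in letters `x_1,…,x_m`
(represented as `Fin m`), with concatenation product. -/
abbrev Wd (m : ℕ) := MonoidAlgebra ℚ (FreeMonoid (Fin m))

/-- The word monomial associated to a list of letters. -/
noncomputable def word {m : ℕ} (l : List (Fin m)) : Wd m :=
  MonoidAlgebra.single (FreeMonoid.ofList l) 1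

/-- All interleavings (shuffles) of two lists. -/
def shuffles {α : Type*} : List α → List α → List (List α)
  | [], bs => [bs]
  | a :: as, [] => [a :: as]
  | a :: as, b :: bs =>
      (shuffles as (b :: bs)).map (a :: ·) ++ (shuffles (a :: as) bs).map (b :: ·)

/-- The shuffle product of two words, as an element of `Wd m`. -/
noncomputable def shuffleProd {m : ℕ} (a b : List (Fin m)) : Wd m :=
  ((shuffles a b).map word).sum

/-- Binary trees representing iterated commutators (Lie monomials). -/
inductive LieTree (m : ℕ) where
  | leaf : Fin m → LieTree m
  | node : LieTree m → LieTree m → LieTree m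

/-- Expansion of a Lie monomial in the word algebra, via `[u,v] = uv - vu`. -/
noncomputable def LieTree.expand {m : ℕ} : LieTree m → Wd m
  | .leaf i => word [i]
  | .node u v => u.expand * v.expand - v.expand * u.expand

/-- The list of leaf labels of a Lie tree, read left to right. -/
def LieTree.leaves {m : ℕ} : LieTree m → List (Fin m)
  | .leaf i => [i]
  | .node u v => u.leaves ++ v.leaves

/-- `Lie(m)` : the span of the multilinear Lie monomials (each letter used exactly once). -/
noncomputable def LieSub (m : ℕ) : Submodule ℚ (Wd m) :=
  Submodule.span ℚ
    {x | ∃ T : LieTree m, T.leaves.Perm (List.finRange m) ∧ x = LieTree.expand T}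

/-- `W(m)` : the span of the multilinear words (each letter used exactly once). -/
noncomputable def Wsub (m : ℕ) : Submodule ℚ (Wd m) :=
  Submodule.span ℚ {x | ∃ l : List (Fin m), l.Perm (List.finRange m) ∧ x = word l}

/-- `Sh(m)` : the span of nontrivial shuffles of multilinear words. -/
noncomputable def ShSub (m : ℕ) : Submodule ℚ (Wd m) :=
  Submodule.span ℚ
    {x | ∃ a b : List (Fin m), a ≠ [] ∧ b ≠ [] ∧ (a ++ b).Perm (List.finRange m) ∧
      x = shuffleProd a b}

/-- The left-nested comb `Γ_{1a} = [...[[x_1, a_1], a_2], …]` (the letter `x_1` is `0`). -/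
def comb {m : ℕ} [NeZero m] (a : List (Fin m)) : LieTree m :=
  a.foldl (fun t i => LieTree.node t (LieTree.leaf i)) (LieTree.leaf 0)

/-- The finset of permutations of the letters `x_2,…,x_m` (i.e. of `(finRange m).tail`). -/
noncomputable def permsTail (m : ℕ) : Finset (List (Fin m)) :=
  ((List.finRange m).tail).permutations.toFinset

namespace Stmt8Aux

open FreeMonoid MonoidAlgebra

variable {m : ℕ}

lemma comb_snoc [NeZero m] (a : List (Fin m)) (i : Fin m) :
    comb (a ++ [i]) = LieTree.node (comb a) (.leaf i) := by
  simp [comb, List.foldl_append]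

lemma comb_leaves [NeZero m] (a : List (Fin m)) : (comb a).leaves = 0 :: a := by
  induction a using List.reverseRecOn with
  | nil => rfl
  | append_singleton a i ih =>
    rw [comb_snoc]
    show (comb a).leaves ++ [i] = 0 :: (a ++ [i])
    rw [ih]; rfl

lemma coeff_mul_word_snoc (x : Wd m) (i : Fin m) (w : List (Fin m)) :
    (x * word [i]).coeff (FreeMonoid.ofList (w ++ [i])) = x.coeff (FreeMonoid.ofList w) := by
  have H : ∀ a : FreeMonoid (Fin m),
      a * FreeMonoid.ofList [i] = FreeMonoid.ofList (w ++ [i]) ↔ a = FreeMonoid.ofList w := by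
    intro a
    show FreeMonoid.toList a ++ [i] = w ++ [i] ↔ FreeMonoid.toList a = w
    constructor
    · intro h
      exact (List.append_inj' h rfl).1
    · intro h
      rw [h]
  have := MonoidAlgebra.mul_single_apply_aux (x := x) (r := (1:ℚ)) _ (fun a _ => H a)
  simpa [word] using this

lemma coeff_mul_word_ne (x : Wd m) {i j : Fin m} (h : j ≠ i) (w : List (Fin m)) :
    (x * word [i]).coeff (FreeMonoid.ofList (w ++ [j])) = 0 := by
  apply MonoidAlgebra.mul_single_apply_of_not_exists_mul
  rintro ⟨d, hd⟩
  have hd' : w ++ [j] = FreeMonoid.toList d ++ [i] := hd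
  have h2 := (List.append_inj' hd' rfl).2
  simp at h2
  exact h h2

lemma coeff_word_mul_ne (x : Wd m) {i j : Fin m} (h : i ≠ j) (w : List (Fin m)) :
    (word [i] * x).coeff (FreeMonoid.ofList (j :: w)) = 0 := by
  apply MonoidAlgebra.single_mul_apply_of_not_exists_mul
  rintro ⟨d, hd⟩
  have hd' : j :: w = i :: FreeMonoid.toList d := hd
  exact h (List.cons.injEq .. ▸ hd').1.symm

lemma comb_coeff [NeZero m] (a : List (Fin m)) : ∀ b : List (Fin m), (∀ j ∈ a, j ≠ 0) →
    (comb a).expand.coeff (FreeMonoid.ofList ((0 : Fin m) :: b)) = if a = b then 1 else 0 := by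
  induction a using List.reverseRecOn with
  | nil =>
    intro b _
    classical
    show (word [(0 : Fin m)]).coeff (FreeMonoid.ofList ((0 : Fin m) :: b)) = _
    rw [word, MonoidAlgebra.single_apply]
    by_cases hb : b = []
    · subst hb; simp
    · rw [if_neg, if_neg (Ne.symm hb)]
      intro hcon
      have h2 : [(0 : Fin m)] = (0 : Fin m) :: b := hcon
      simp at h2
      exact hb h2
  | append_singleton a i ih =>
    intro b hb
    have hi : i ≠ 0 := hb i (by simp)
    have ha : ∀ j ∈ a, j ≠ 0 := fun j hj => hb j (by simp [hj])
    rw [comb_snoc]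
    show ((comb a).expand * word [i] - word [i] * (comb a).expand).coeff _ = _
    rw [MonoidAlgebra.coeff_sub, Finsupp.sub_apply]
    rw [coeff_word_mul_ne _ hi, sub_zero]
    rcases List.eq_nil_or_concat b with rfl | ⟨b', j, rfl⟩
    · have h0 : ((0 : Fin m) :: ([] : List (Fin m))) = [] ++ [(0 : Fin m)] := rfl
      rw [h0, coeff_mul_word_ne _ (Ne.symm hi)]
      rw [if_neg (by simp)]
    · simp only [List.concat_eq_append]
      have h0 : ((0 : Fin m) :: (b' ++ [j])) = (0 :: b') ++ [j] := by simp
      rw [h0]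
      by_cases hij : j = i
      · subst hij
        rw [coeff_mul_word_snoc, ih b' ha]
        by_cases hab : a = b'
        · subst hab; simp
        · rw [if_neg hab, if_neg (fun hc => hab (List.append_inj' hc rfl).1)]
      · rw [coeff_mul_word_ne _ hij]
        rw [if_neg]
        intro hcon
        have h2 := (List.append_inj' hcon rfl).2
        simp at h2
        exact hij h2.symm

/-- The set of expansions of combs indexed by permutations of `L`. -/
def combSet [NeZero m] (L : List (Fin m)) : Set (Wd m) :=
  {x | ∃ b : List (Fin m), b.Perm L ∧ x = (comb b).expand}

lemma combSet_perm [NeZero m] {L L' : List (Fin m)} (h : L.Perm L') : combSet L = combSet L' := by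
  ext x
  constructor <;> rintro ⟨b, hb, rfl⟩
  exacts [⟨b, hb.trans h, rfl⟩, ⟨b, hb.trans h.symm, rfl⟩]

lemma bracket_mem_span [NeZero m] (z : LieTree m)
    (ih : ∀ b : List (Fin m), ((comb b).expand * z.expand - z.expand * (comb b).expand)
        ∈ Submodule.span ℚ (combSet (b ++ z.leaves)))
    {L : List (Fin m)} {x : Wd m} (hx : x ∈ Submodule.span ℚ (combSet L)) :
    (x * z.expand - z.expand * x) ∈ Submodule.span ℚ (combSet (L ++ z.leaves)) := by
  let φ : Wd m →ₗ[ℚ] Wd m := LinearMap.mulRight ℚ z.expand - LinearMap.mulLeft ℚ z.expand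
  have h1 : combSet L ⊆ ((Submodule.span ℚ (combSet (L ++ z.leaves))).comap φ : Set (Wd m)) := by
    rintro y ⟨b, hb, rfl⟩
    simp only [SetLike.mem_coe, Submodule.mem_comap]
    have hφ : φ ((comb b).expand) =
        (comb b).expand * z.expand - z.expand * (comb b).expand := rfl
    rw [hφ, ← combSet_perm (hb.append_right z.leaves)]
    exact ih b
  have h2 := Submodule.span_le.mpr h1 hx
  exact h2

lemma lemA [NeZero m] (z : LieTree m) : ∀ a : List (Fin m),
    ((comb a).expand * z.expand - z.expand * (comb a).expand)
      ∈ Submodule.span ℚ (combSet (a ++ z.leaves)) := by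
  induction z with
  | leaf i =>
    intro a
    have h1 : (comb a).expand * (LieTree.leaf i).expand
        - (LieTree.leaf i).expand * (comb a).expand = (comb (a ++ [i])).expand := by
      rw [comb_snoc]; rfl
    rw [h1]
    exact Submodule.subset_span ⟨a ++ [i], List.Perm.refl _, rfl⟩
  | node z1 z2 ih1 ih2 =>
    intro a
    have key : (comb a).expand * (LieTree.node z1 z2).expand
          - (LieTree.node z1 z2).expand * (comb a).expand
        = (((comb a).expand * z1.expand - z1.expand * (comb a).expand) * z2.expand
            - z2.expand * ((comb a).expand * z1.expand - z1.expand * (comb a).expand))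
          - (((comb a).expand * z2.expand - z2.expand * (comb a).expand) * z1.expand
            - z1.expand * ((comb a).expand * z2.expand - z2.expand * (comb a).expand)) := by
      show (comb a).expand * (z1.expand * z2.expand - z2.expand * z1.expand)
          - (z1.expand * z2.expand - z2.expand * z1.expand) * (comb a).expand = _
      noncomm_ring
    rw [key]
    have t1 := bracket_mem_span z2 ih2 (ih1 a)
    have t2 := bracket_mem_span z1 ih1 (ih2 a)
    have hp : (a ++ z2.leaves ++ z1.leaves).Perm (a ++ z1.leaves ++ z2.leaves) := by
      rw [List.append_assoc, List.append_assoc]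
      exact List.Perm.append_left a List.perm_append_comm
    rw [combSet_perm hp] at t2
    have h3 := Submodule.sub_mem _ t1 t2
    have hleq : (a ++ z1.leaves ++ z2.leaves) = a ++ (LieTree.node z1 z2).leaves := by
      show _ = a ++ (z1.leaves ++ z2.leaves)
      rw [List.append_assoc]
    rw [hleq] at h3
    exact h3

lemma lemB [NeZero m] (T : LieTree m) (hnd : T.leaves.Nodup) (h0 : (0 : Fin m) ∈ T.leaves) :
    T.expand ∈ Submodule.span ℚ (combSet (T.leaves.erase 0)) := by
  induction T with
  | leaf i =>
    have hi : (0 : Fin m) = i := by simpa [LieTree.leaves] using h0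
    subst hi
    apply Submodule.subset_span
    exact ⟨[], by simp [LieTree.leaves], rfl⟩
  | node u v ihu ihv =>
    have hlv : (LieTree.node u v).leaves = u.leaves ++ v.leaves := rfl
    rw [hlv] at hnd h0 ⊢
    have hndu : u.leaves.Nodup := hnd.of_append_left
    have hndv : v.leaves.Nodup := hnd.of_append_right
    have hdisj := List.disjoint_of_nodup_append hnd
    rcases List.mem_append.mp h0 with h0u | h0v
    · have h0v' : (0 : Fin m) ∉ v.leaves := hdisj h0u
      have hu := ihu hndu h0u
      have hb := bracket_mem_span v (lemA v) hu
      rw [List.erase_append_left _ h0u]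
      exact hb
    · have h0u' : (0 : Fin m) ∉ u.leaves := fun hc => hdisj hc h0v
      have hv := ihv hndv h0v
      have hb := bracket_mem_span u (lemA u) hv
      have hp : (v.leaves.erase 0 ++ u.leaves).Perm ((u.leaves ++ v.leaves).erase 0) := by
        rw [List.erase_append_right _ h0u']
        exact List.perm_append_comm
      rw [combSet_perm hp] at hb
      have : (LieTree.node u v).expand = -(v.expand * u.expand - u.expand * v.expand) := by
        show u.expand * v.expand - v.expand * u.expand = _
        rw [neg_sub]
      rw [this]
      exact Submodule.neg_mem _ hb

lemma finRange_eq [NeZero m] : List.finRange m = 0 :: (List.finRange m).tail := by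
  rcases Nat.exists_eq_succ_of_ne_zero (NeZero.ne m) with ⟨k, rfl⟩
  rw [List.finRange_succ]
  rfl

lemma zero_not_mem_tail [NeZero m] : (0 : Fin m) ∉ (List.finRange m).tail := by
  have h := List.nodup_finRange m
  rw [finRange_eq] at h
  exact (List.nodup_cons.mp h).1

lemma main [NeZero m] (T : LieTree m) (hT : T.leaves.Perm (List.finRange m)) :
    T.expand = ∑ a ∈ (permsTail m).attach,
      (T.expand.coeff (FreeMonoid.ofList ((0 : Fin m) :: a.1))) • (comb a.1).expand := by
  have hnd : T.leaves.Nodup := hT.nodup_iff.mpr (List.nodup_finRange m)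
  have h0 : (0 : Fin m) ∈ T.leaves := hT.mem_iff.mpr (List.mem_finRange 0)
  have hB := lemB T hnd h0
  have hper : (T.leaves.erase 0).Perm ((List.finRange m).tail) := by
    have := hT.erase (0 : Fin m)
    rwa [show (List.finRange m).erase 0 = (List.finRange m).tail by
      conv_lhs => rw [finRange_eq]
      rw [List.erase_cons_head]] at this
  rw [combSet_perm hper] at hB
  -- rewrite combSet tail as range of a function on the attached finset
  set f : {a // a ∈ permsTail m} → Wd m := fun a => (comb a.1).expand with hf
  have hset : combSet ((List.finRange m).tail) = Set.range f := by
    ext x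
    constructor
    · rintro ⟨b, hb, rfl⟩
      exact ⟨⟨b, List.mem_toFinset.mpr (List.mem_permutations.mpr hb)⟩, rfl⟩
    · rintro ⟨a, rfl⟩
      exact ⟨a.1, List.mem_permutations.mp (List.mem_toFinset.mp a.2), rfl⟩
  rw [hset] at hB
  obtain ⟨cf, hcf⟩ := (Submodule.mem_span_range_iff_exists_fun ℚ).mp hB
  rw [Finset.univ_eq_attach] at hcf
  -- coefficient extraction
  have hcoef : ∀ b ∈ (permsTail m).attach,
      cf b = T.expand.coeff (FreeMonoid.ofList ((0 : Fin m) :: b.1)) := by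
    intro b _
    rw [← hcf]
    rw [MonoidAlgebra.coeff_sum, Finsupp.finset_sum_apply]
    have hterm : ∀ a ∈ (permsTail m).attach,
        (cf a • f a).coeff (FreeMonoid.ofList ((0 : Fin m) :: b.1)) = if a = b then cf a else 0 := by
      intro a _
      have haperm : a.1.Perm ((List.finRange m).tail) :=
        List.mem_permutations.mp (List.mem_toFinset.mp a.2)
      have hne : ∀ j ∈ a.1, j ≠ 0 := by
        intro j hj hc
        exact zero_not_mem_tail (m := m) (haperm.mem_iff.mp (hc ▸ hj))
      rw [MonoidAlgebra.coeff_smul_apply, comb_coeff a.1 b.1 hne]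
      by_cases h : a = b
      · subst h; simp
      · rw [if_neg (fun hc => h (Subtype.ext hc)), if_neg h]
        simp
    rw [Finset.sum_congr rfl hterm, Finset.sum_ite_eq' _ b, if_pos (Finset.mem_attach _ _)]
  conv_lhs => rw [← hcf]
  apply Finset.sum_congr rfl
  intro a ha
  rw [hcoef a ha]

end Stmt8Aux
/-- for any linear map `N : Lie(n-1) → V` and any multilinear Lie monomial `Γ`,
`N(Γ) = Σ_a (Γ, 1a) N(Γ_{1a})`, the sum running over the permutations `a` of the letters
other than `x_1`. -/
theorem stmt8 (n : ℕ) [NeZero (n - 1)] (V : Type*) [AddCommGroup V] [Module ℚ V]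
    (N : LieSub (n - 1) →ₗ[ℚ] V)
    (T : LieTree (n - 1)) (hT : T.leaves.Perm (List.finRange (n - 1)))
    (x : LieSub (n - 1)) (hx : (x : Wd (n - 1)) = T.expand)
    (c : ∀ a : List (Fin (n - 1)), a.Perm ((List.finRange (n - 1)).tail) → LieSub (n - 1))
    (hc : ∀ a h, ((c a h : LieSub (n - 1)) : Wd (n - 1)) = (comb a).expand) :
    N x = ∑ a ∈ (permsTail (n - 1)).attach,
        (T.expand.coeff (FreeMonoid.ofList ((0 : Fin (n - 1)) :: a.1))) •
          N (c a.1 (List.mem_permutations.mp (List.mem_toFinset.mp a.2))) := by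
  have hxeq : x = ∑ a ∈ (permsTail (n - 1)).attach,
      (T.expand.coeff (FreeMonoid.ofList ((0 : Fin (n - 1)) :: a.1))) •
        c a.1 (List.mem_permutations.mp (List.mem_toFinset.mp a.2)) := by
    apply Subtype.ext
    show (x : Wd (n - 1)) = _
    rw [hx]
    conv_lhs => rw [Stmt8Aux.main T hT]
    rw [AddSubmonoidClass.coe_finset_sum]
    apply Finset.sum_congr rfl
    intro a ha
    rw [SetLike.val_smul, hc]
  rw [hxeq, map_sum]
  apply Finset.sum_congr rfl
  intro a ha
  rw [map_smul]
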